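/- Let G be a graph and T_1, ..., T_n a family of induced subtrees of G such that (i) every vertex of G lies in exactly d+2 of the trees, and (ii) any two adjacent vertices of G lie together in exactly d+1 of the trees. For a tree T_i, a root r ∈ V(T_i), and an edge of T_i oriented as (u, v) with v closer to r, the set {j : u ∈ T_j} \ {j : v ∈ T_j} has exactly one element, called the label of the oriented edge. If additionally every two trees in the family intersect and each tree has n - d - 1 vertices, then all n - d - 2 edge labels of the rooted oriented tree T_i(r) are pairwise distinct, and all are distinct from the indices {j : r ∈ T_j}. -/

import Mathlib

/-- `û = {j : u ∈ T j}`, the set of indices of trees containing the vertex `u`. -/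
def hatSet {V : Type*} [DecidableEq V] (n : ℕ) (T : Fin n → Finset V) (u : V) :
    Finset (Fin n) :=
  Finset.univ.filter fun j => u ∈ T j

theorem stmt_17 {V : Type*} [Fintype V] [DecidableEq V] (G : SimpleGraph V)
    (n d : ℕ) (T : Fin n → Finset V)
    (htree : ∀ j, (G.induce ((T j : Set V))).IsTree)
    (hvert : ∀ v : V, (hatSet n T v).card = d + 2)
    (hedge : ∀ u v : V, G.Adj u v →
      (Finset.univ.filter fun j => u ∈ T j ∧ v ∈ T j).card = d + 1)
    (hint : ∀ j j' : Fin n, ((T j) ∩ (T j')).Nonempty)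
    (hcard : ∀ j, (T j).card = n - d - 1)
    (i : Fin n) (r : V) (hr : r ∈ T i) :
    -- (a) the label of each oriented edge is well defined: `û \ v̂` is a singleton
    (∀ u v : (T i : Set V), (G.induce ((T i : Set V))).Adj u v →
      (hatSet n T (u : V) \ hatSet n T (v : V)).card = 1) ∧
    -- (b) the labels of distinct edges oriented towards the root `r` are distinct
    (∀ u v u' v' : (T i : Set V),
      (G.induce ((T i : Set V))).Adj u v →
      (G.induce ((T i : Set V))).Adj u' v' →
      (G.induce ((T i : Set V))).dist v ⟨r, Finset.mem_coe.mpr hr⟩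
        < (G.induce ((T i : Set V))).dist u ⟨r, Finset.mem_coe.mpr hr⟩ →
      (G.induce ((T i : Set V))).dist v' ⟨r, Finset.mem_coe.mpr hr⟩
        < (G.induce ((T i : Set V))).dist u' ⟨r, Finset.mem_coe.mpr hr⟩ →
      (u, v) ≠ (u', v') →
      hatSet n T (u : V) \ hatSet n T (v : V) ≠ hatSet n T (u' : V) \ hatSet n T (v' : V)) ∧
    -- (c) every label differs from all indices of trees containing `r`
    (∀ u v : (T i : Set V),
      (G.induce ((T i : Set V))).Adj u v →
      (G.induce ((T i : Set V))).dist v ⟨r, Finset.mem_coe.mpr hr⟩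
        < (G.induce ((T i : Set V))).dist u ⟨r, Finset.mem_coe.mpr hr⟩ →
      Disjoint (hatSet n T (u : V) \ hatSet n T (v : V)) (hatSet n T r)) := by
  classical
  set H := G.induce ((T i : Set V)) with hH
  obtain ⟨hconn', hacyc'⟩ := htree i
  have hconn : H.Connected := hconn'
  have hacyc : H.IsAcyclic := hacyc'
  set r0 : (T i : Set V) := ⟨r, Finset.mem_coe.mpr hr⟩ with hr0def
  -- basics
  have hn2 : d + 2 ≤ n := by
    have h1 := hvert r
    have h2 := Finset.card_le_univ (hatSet n T r)
    simp only [Finset.card_univ, Fintype.card_fin] at h2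
    omega
  have hinter : ∀ x y : V, G.Adj x y →
      ((hatSet n T x) ∩ (hatSet n T y)).card = d + 1 := by
    intro x y h
    rw [show hatSet n T x ∩ hatSet n T y
        = Finset.univ.filter fun j => x ∈ T j ∧ y ∈ T j by
      ext j; simp [hatSet]]
    exact hedge x y h
  have parta : ∀ u v : (T i : Set V), H.Adj u v →
      (hatSet n T (u:V) \ hatSet n T (v:V)).card = 1 := by
    intro u v h
    have h1 := hvert (u:V)
    have h2 := hinter (u:V) (v:V) h
    have h3 := Finset.card_sdiff_add_card_inter (hatSet n T (u:V)) (hatSet n T (v:V))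
    omega
  have hcardα : Fintype.card (T i : Set V) = n - d - 1 := by
    rw [← hcard i]
    exact Fintype.card_congr (Equiv.subtypeEquivRight (fun x => Finset.mem_coe))
      |>.trans (Fintype.card_coe (T i))
  -- parent map
  have hpar0 : ∀ u : (T i : Set V), u ≠ r0 →
      ∃ v, H.Adj u v ∧ H.dist v r0 + 1 = H.dist u r0 := by
    intro u hu
    have hpos : 0 < H.dist u r0 := hconn.pos_dist_of_ne hu
    obtain ⟨p, hp⟩ := (hconn u r0).exists_walk_length_eq_dist
    cases p with
    | nil => rw [SimpleGraph.dist_self] at hpos; omega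
    | @cons _ v _ h q =>
      have hq : H.dist v r0 ≤ q.length := SimpleGraph.dist_le q
      have htri : H.dist u r0 ≤ H.dist u v + H.dist v r0 := hconn.dist_triangle
      have huv : H.dist u v ≤ 1 := by simpa using SimpleGraph.dist_le h.toWalk
      simp only [SimpleGraph.Walk.length_cons] at hp
      exact ⟨v, h, by omega⟩
  have hpuniq : ∀ u v w : (T i : Set V), H.Adj u v → H.Adj u w →
      H.dist v r0 < H.dist u r0 → H.dist w r0 < H.dist u r0 → v = w := by
    intro u v w h1 h2 hv hw
    obtain ⟨pv, hpv⟩ := (hconn v r0).exists_walk_length_eq_dist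
    obtain ⟨pw, hpw⟩ := (hconn w r0).exists_walk_length_eq_dist
    have hbv : pv.bypass.length = H.dist v r0 :=
      le_antisymm (hpv ▸ pv.length_bypass_le) (SimpleGraph.dist_le _)
    have hbw : pw.bypass.length = H.dist w r0 :=
      le_antisymm (hpw ▸ pw.length_bypass_le) (SimpleGraph.dist_le _)
    have hunv : u ∉ pv.bypass.support := by
      intro hmem
      have h3 := SimpleGraph.Walk.length_dropUntil_le pv.bypass hmem
      have h4 := SimpleGraph.dist_le (pv.bypass.dropUntil u hmem)
      omega
    have hunw : u ∉ pw.bypass.support := by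
      intro hmem
      have h3 := SimpleGraph.Walk.length_dropUntil_le pw.bypass hmem
      have h4 := SimpleGraph.dist_le (pw.bypass.dropUntil u hmem)
      omega
    have P1 : (SimpleGraph.Walk.cons h1 pv.bypass).IsPath :=
      (SimpleGraph.Walk.bypass_isPath pv).cons hunv
    have P2 : (SimpleGraph.Walk.cons h2 pw.bypass).IsPath :=
      (SimpleGraph.Walk.bypass_isPath pw).cons hunw
    have hpq : (⟨_, P1⟩ : H.Path u r0) = ⟨_, P2⟩ :=
      SimpleGraph.isAcyclic_iff_path_unique.mp hacyc _ _
    have hwalk : SimpleGraph.Walk.cons h1 pv.bypass = SimpleGraph.Walk.cons h2 pw.bypass :=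
      congrArg Subtype.val hpq
    have := congrArg (fun q => q.getVert 1) hwalk
    simpa using this
  have hparU : ∀ u : (T i : Set V), ∃ v,
      u ≠ r0 → H.Adj u v ∧ H.dist v r0 + 1 = H.dist u r0 := by
    intro u
    by_cases h : u = r0
    · exact ⟨r0, fun hc => absurd h hc⟩
    · obtain ⟨v, hv⟩ := hpar0 u h; exact ⟨v, fun _ => hv⟩
  choose p hp using hparU
  -- edge toward root determines parent
  have hedgev : ∀ u v : (T i : Set V), H.Adj u v → H.dist v r0 < H.dist u r0 →
      u ≠ r0 ∧ v = p u := by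
    intro u v h hlt
    have hu : u ≠ r0 := by
      intro he
      rw [he, SimpleGraph.dist_self] at hlt
      omega
    obtain ⟨ha, hd⟩ := hp u hu
    exact ⟨hu, hpuniq u v (p u) h ha hlt (by omega)⟩
  -- the finsets A j, B j
  set A : Fin n → Finset (T i : Set V) :=
    fun j => Finset.univ.filter (fun u => (u:V) ∈ T j) with hA
  set B : Fin n → Finset (T i : Set V) :=
    fun j => (Finset.univ.erase r0).filter
      (fun u => (u:V) ∈ T j ∧ ((p u : (T i : Set V)) : V) ∈ T j) with hB
  -- sums
  have hsumA : ∑ j : Fin n, (A j).card = (n - d - 1) * (d + 2) := by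
    have h1 : ∀ j, (A j).card = ∑ u : (T i : Set V), if (u:V) ∈ T j then 1 else 0 := by
      intro j; rw [hA]; rw [Finset.card_filter]
    calc ∑ j : Fin n, (A j).card
        = ∑ j : Fin n, ∑ u : (T i : Set V), if (u:V) ∈ T j then 1 else 0 :=
          Finset.sum_congr rfl (fun j _ => h1 j)
      _ = ∑ u : (T i : Set V), ∑ j : Fin n, if (u:V) ∈ T j then 1 else 0 :=
          Finset.sum_comm
      _ = ∑ _u : (T i : Set V), (d + 2) := by
          refine Finset.sum_congr rfl (fun u _ => ?_)
          rw [← Finset.card_filter, ← hvert (u:V)]; rfl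
      _ = (n - d - 1) * (d + 2) := by
          rw [Finset.sum_const, Finset.card_univ, hcardα, smul_eq_mul]
  have hsumB : ∑ j : Fin n, (B j).card = (n - d - 2) * (d + 1) := by
    have h1 : ∀ j, (B j).card = ∑ u ∈ Finset.univ.erase r0,
        if (u:V) ∈ T j ∧ ((p u : (T i : Set V)) : V) ∈ T j then 1 else 0 := by
      intro j; rw [hB]; rw [Finset.card_filter]
    calc ∑ j : Fin n, (B j).card
        = ∑ j : Fin n, ∑ u ∈ Finset.univ.erase r0,
            if (u:V) ∈ T j ∧ ((p u : (T i : Set V)) : V) ∈ T j then 1 else 0 :=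
          Finset.sum_congr rfl (fun j _ => h1 j)
      _ = ∑ u ∈ Finset.univ.erase r0, ∑ j : Fin n,
            if (u:V) ∈ T j ∧ ((p u : (T i : Set V)) : V) ∈ T j then 1 else 0 :=
          Finset.sum_comm
      _ = ∑ _u ∈ Finset.univ.erase r0, (d + 1) := by
          refine Finset.sum_congr rfl (fun u hu => ?_)
          have hune : u ≠ r0 := (Finset.mem_erase.mp hu).1
          have hadj : G.Adj (u:V) ((p u : (T i : Set V)) : V) := (hp u hune).1
          rw [← hinter (u:V) _ hadj]
          rw [show hatSet n T (u:V) ∩ hatSet n T ((p u : (T i : Set V)) : V)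
              = Finset.univ.filter fun j => (u:V) ∈ T j ∧ ((p u : (T i : Set V)) : V) ∈ T j by
            ext j; simp [hatSet]]
          rw [Finset.card_filter]
      _ = (n - d - 2) * (d + 1) := by
          rw [Finset.sum_const, Finset.card_erase_of_mem (Finset.mem_univ r0),
            Finset.card_univ, hcardα, smul_eq_mul]
          have e : n - d - 1 - 1 = n - d - 2 := by omega
          rw [e]
  -- minimal vertices
  have hmins : ∀ j : Fin n, ∃ mj, mj ∈ A j ∧
      (∀ w ∈ A j, H.dist mj r0 ≤ H.dist w r0) ∧ B j ⊆ (A j).erase mj := by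
    intro j
    have hne : (A j).Nonempty := by
      obtain ⟨x, hx⟩ := hint j i
      rw [Finset.mem_inter] at hx
      exact ⟨⟨x, Finset.mem_coe.mpr hx.2⟩, by simp [hA, hx.1]⟩
    obtain ⟨mj, hmA, hmin⟩ := Finset.exists_min_image (A j) (fun u => H.dist u r0) hne
    refine ⟨mj, hmA, hmin, ?_⟩
    intro u hu
    rw [hB, Finset.mem_filter, Finset.mem_erase] at hu
    obtain ⟨⟨hune, -⟩, huj, hpuj⟩ := hu
    rw [Finset.mem_erase]
    constructor
    · intro heq
      have hpA : p u ∈ A j := by simp [hA, hpuj]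
      have h5 := hmin (p u) hpA
      have hd := (hp u hune).2
      rw [heq] at hd h5
      omega
    · simp [hA, huj]
  choose m hmA hmin hsub using hmins
  -- forcing equality
  have hle : ∀ j, (B j).card + 1 ≤ (A j).card := by
    intro j
    have h1 := Finset.card_le_card (hsub j)
    have h2 : ((A j).erase (m j)).card = (A j).card - 1 :=
      Finset.card_erase_of_mem (hmA j)
    have h3 : 1 ≤ (A j).card := Finset.card_pos.mpr ⟨m j, hmA j⟩
    omega
  have htot : ∑ j : Fin n, ((B j).card + 1) = ∑ j : Fin n, (A j).card := by
    rw [Finset.sum_add_distrib, hsumB, hsumA, Finset.sum_const, Finset.card_univ,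
      Fintype.card_fin, smul_eq_mul, mul_one]
    obtain ⟨k, hk⟩ : ∃ k, n = k + d + 2 := ⟨n - d - 2, by omega⟩
    subst hk
    have e1 : k + d + 2 - d - 2 = k := by omega
    have e2 : k + d + 2 - d - 1 = k + 1 := by omega
    rw [e1, e2]; ring
  have heqc : ∀ j : Fin n, (B j).card + 1 = (A j).card := by
    have := (Finset.sum_eq_sum_iff_of_le (s := (Finset.univ : Finset (Fin n)))
      (f := fun j => (B j).card + 1) (g := fun j => (A j).card)
      (fun j _ => hle j)).mp htot
    exact fun j => this j (Finset.mem_univ j)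
  have hBeq : ∀ j, B j = (A j).erase (m j) := by
    intro j
    refine Finset.eq_of_subset_of_card_le (hsub j) ?_
    rw [Finset.card_erase_of_mem (hmA j)]
    have := heqc j
    omega
  -- key : top vertex is unique
  have hkey : ∀ (j : Fin n) (u : (T i : Set V)), (u:V) ∈ T j → u ≠ r0 →
      ((p u : (T i : Set V)) : V) ∉ T j → u = m j := by
    intro j u hu hur hpu
    by_contra hne
    have hmem : u ∈ (A j).erase (m j) :=
      Finset.mem_erase.mpr ⟨hne, by simp [hA, hu]⟩
    rw [← hBeq j, hB, Finset.mem_filter] at hmem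
    exact hpu hmem.2.2
  -- part (c) core
  have hc : ∀ u v : (T i : Set V), H.Adj u v → H.dist v r0 < H.dist u r0 →
      ∀ j : Fin n, (u:V) ∈ T j → (v:V) ∉ T j → r ∉ T j := by
    intro u v hadj hlt j hju hjv hjr
    obtain ⟨hur, hpe⟩ := hedgev u v hadj hlt
    have hu := hkey j u hju hur (hpe ▸ hjv)
    have hr0A : r0 ∈ A j := by simp [hA, hr0def, hjr]
    have h5 := hmin j r0 hr0A
    rw [← hu] at h5
    rw [SimpleGraph.dist_self] at h5
    omega
  refine ⟨parta, ?_, ?_⟩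
  · -- part (b)
    intro u v u' v' h h' hlt hlt' hne hlab
    obtain ⟨jj, hj⟩ : (hatSet n T (u:V) \ hatSet n T (v:V)).Nonempty := by
      rw [← Finset.card_pos, parta u v h]; omega
    have hj' : jj ∈ hatSet n T (u':V) \ hatSet n T (v':V) := hlab ▸ hj
    rw [Finset.mem_sdiff] at hj hj'
    simp only [hatSet, Finset.mem_filter, Finset.mem_univ, true_and] at hj hj'
    obtain ⟨hur, hpe⟩ := hedgev u v h hlt
    obtain ⟨hur', hpe'⟩ := hedgev u' v' h' hlt'
    have h1 := hkey jj u hj.1 hur (hpe ▸ hj.2)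
    have h2 := hkey jj u' hj'.1 hur' (hpe' ▸ hj'.2)
    have huu : u = u' := h1.trans h2.symm
    have hvv : v = v' := by rw [hpe, hpe', huu]
    exact hne (by rw [huu, hvv])
  · -- part (c)
    intro u v hadj hlt
    rw [Finset.disjoint_left]
    intro j hj hjr
    rw [Finset.mem_sdiff] at hj
    simp only [hatSet, Finset.mem_filter, Finset.mem_univ, true_and] at hj hjr
    exact hc u v hadj hlt j hj.1 hj.2 hjr
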